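/- For every q ≥ 2 and n ≥ 0, there is a partition of B_q(n) into pairwise disjoint upper Boolean subsets such that, for each l = 0, 1, …, n, exactly (q−2)^l · C(n,l) of the parts are upper Boolean of rank n−l (with 0^0 = 1, so for q = 2 the only parts have rank n). -/

import Mathlib

def supp {n q : ℕ} (a : Fin n → Fin q) : Finset (Fin n) :=
  Finset.univ.filter (fun i => (a i : ℕ) ≠ 0)

def rk {n q : ℕ} (a : Fin n → Fin q) : ℕ := (supp a).card

def tle {n q : ℕ} (a b : Fin n → Fin q) : Prop :=
  ∀ i, (a i : ℕ) ≠ 0 → a i = b i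

def IsUpperBooleanSubset (q n t : ℕ) (S : Set (Fin n → Fin q)) : Prop :=
  t ≤ n ∧
  {r : ℕ | ∃ a ∈ S, rk a = r} = Set.Icc (n - t) n ∧
  ∃ e : S ≃ Finset (Fin t), ∀ a b : S, tle a.1 b.1 ↔ e a ⊆ e b

namespace UBaux

variable {n q : ℕ}

lemma mem_supp {a : Fin n → Fin q} {i : Fin n} : i ∈ supp a ↔ (a i : ℕ) ≠ 0 := by
  simp [supp]

lemma rk_le (a : Fin n → Fin q) : rk a ≤ n := by
  simpa [rk] using (Finset.card_le_univ (supp a))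

/-- The parts of the partition, indexed by tuples avoiding the value 1. -/
def part (c : Fin n → Fin q) : Set (Fin n → Fin q) :=
  {a | ∀ i, ((c i : ℕ) = 0 → (a i : ℕ) ≤ 1) ∧ ((c i : ℕ) ≠ 0 → a i = c i)}

lemma supp_subset_of_mem {c a : Fin n → Fin q} (ha : a ∈ part c) : supp c ⊆ supp a := by
  intro i hi
  rw [mem_supp] at hi ⊢
  rw [(ha i).2 hi]; exact hi

lemma tle_antisymm {a b : Fin n → Fin q} (h1 : tle a b) (h2 : tle b a) : a = b := by
  funext i
  by_cases h : (a i : ℕ) = 0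
  · by_cases h' : (b i : ℕ) = 0
    · exact Fin.ext (h.trans h'.symm)
    · exact (h2 i h').symm
  · exact h1 i h

/-- The canonical index of the part containing `a`. -/
def idx (hq : 2 ≤ q) (a : Fin n → Fin q) : Fin n → Fin q :=
  fun i => if (a i : ℕ) ≤ 1 then ⟨0, by omega⟩ else a i

lemma idx_good (hq : 2 ≤ q) (a : Fin n → Fin q) : ∀ i, ((idx hq a) i : ℕ) ≠ 1 := by
  intro i
  unfold idx
  split <;> simp_all <;> omega

lemma mem_part_idx (hq : 2 ≤ q) (a : Fin n → Fin q) : a ∈ part (idx hq a) := by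
  intro i
  unfold idx
  by_cases h : (a i : ℕ) ≤ 1
  · rw [if_pos h]
    exact ⟨fun _ => h, fun h' => absurd rfl h'⟩
  · rw [if_neg h]
    exact ⟨fun h0 => by omega, fun _ => rfl⟩

lemma idx_eq_of_mem (hq : 2 ≤ q) {c a : Fin n → Fin q} (hc : ∀ i, (c i : ℕ) ≠ 1) (ha : a ∈ part c) :
    idx hq a = c := by
  funext i
  obtain ⟨h0, h1⟩ := ha i
  unfold idx
  by_cases h : (c i : ℕ) = 0
  · have := h0 h
    rw [if_pos this]
    refine Fin.ext ?_
    simp [h]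
  · rw [h1 h]
    have hlt := (c i).is_lt
    have : ¬ ((c i : ℕ) ≤ 1) := by
      have := hc i; omega
    rw [if_neg this]

/-- Elements of `part c` realizing every rank in `[rk c, n]`. -/
lemma rankset_part (hq : 2 ≤ q) {c : Fin n → Fin q} (hc : ∀ i, (c i : ℕ) ≠ 1) :
    {r : ℕ | ∃ a ∈ part c, rk a = r} = Set.Icc (rk c) n := by
  ext r
  simp only [Set.mem_setOf_eq, Set.mem_Icc]
  constructor
  · rintro ⟨a, ha, rfl⟩
    exact ⟨Finset.card_le_card (supp_subset_of_mem ha), rk_le a⟩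
  · rintro ⟨h1, h2⟩
    simp only [rk] at h1 h2 ⊢
    have hcompl : r - (supp c).card ≤ ((supp c)ᶜ : Finset (Fin n)).card := by
      rw [Finset.card_compl]
      simp only [Fintype.card_fin]
      omega
    obtain ⟨T, hTsub, hTcard⟩ := Finset.exists_subset_card_eq hcompl
    refine ⟨fun i => if (c i : ℕ) ≠ 0 then c i else if i ∈ T then ⟨1, by omega⟩ else ⟨0, by omega⟩,
      ?_, ?_⟩
    · intro i
      constructor
      · intro h
        simp only [h, ne_eq, not_true_eq_false, if_false, not_false_eq_true, if_true]
        split <;> simp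
      · intro h
        simp [h]
    · have hsupp : supp (fun i => if (c i : ℕ) ≠ 0 then c i
          else if i ∈ T then (⟨1, by omega⟩ : Fin q) else ⟨0, by omega⟩) = supp c ∪ T := by
        ext i
        simp only [mem_supp, Finset.mem_union]
        by_cases h : (c i : ℕ) = 0
        · simp only [h, ne_eq, not_true_eq_false, if_false, not_false_eq_true, if_true]
          by_cases hT : i ∈ T <;> simp [hT, mem_supp, h]
        · simp [h, mem_supp]
      have hdisj : Disjoint (supp c) T := by
        refine Finset.disjoint_left.mpr ?_
        intro i hi hiT
        have := hTsub hiT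
        simp [Finset.mem_compl] at this
        exact this hi
      rw [hsupp, Finset.card_union_of_disjoint hdisj, hTcard]
      omega

noncomputable def fe (c : Fin n → Fin q) : {i : Fin n // i ∈ (supp c)ᶜ} ≃ Fin (n - rk c) :=
  Fintype.equivFinOfCardEq (by simp [Fintype.card_coe, Finset.card_compl, rk])

noncomputable def E (c : Fin n → Fin q) (a : part c) : Finset (Fin (n - rk c)) :=
  Finset.univ.filter (fun j => (a.1 ((fe c).symm j).1 : ℕ) = 1)

lemma E_mono {c : Fin n → Fin q} (a b : part c) :
    tle a.1 b.1 ↔ E c a ⊆ E c b := by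
  constructor
  · intro h j hj
    simp only [E, Finset.mem_filter, Finset.mem_univ, true_and] at hj ⊢
    rw [← h _ (by omega)]
    exact hj
  · intro h i hi
    by_cases hs : i ∈ supp c
    · rw [(a.2 i).2 (mem_supp.mp hs), (b.2 i).2 (mem_supp.mp hs)]
    · have hic : (c i : ℕ) = 0 := by simpa [mem_supp] using hs
      have h1 : (a.1 i : ℕ) = 1 := by have := (a.2 i).1 hic; omega
      have hmem : i ∈ (supp c)ᶜ := Finset.mem_compl.mpr hs
      have hj : fe c ⟨i, hmem⟩ ∈ E c a := by
        simp only [E, Finset.mem_filter, Finset.mem_univ, true_and, Equiv.symm_apply_apply]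
        exact h1
      have h2 := h hj
      simp only [E, Finset.mem_filter, Finset.mem_univ, true_and,
        Equiv.symm_apply_apply] at h2
      exact Fin.ext (h1.trans h2.symm)

lemma E_surj (hq : 2 ≤ q) (c : Fin n → Fin q) :
    Function.Surjective (fun a : part c => E c a) := by
  classical
  intro T
  refine ⟨⟨fun i => if h : i ∈ (supp c)ᶜ then
      (if fe c ⟨i, h⟩ ∈ T then ⟨1, by omega⟩ else ⟨0, by omega⟩) else c i, ?_⟩, ?_⟩
  · intro i
    constructor
    · intro h0
      have h : i ∈ (supp c)ᶜ := by simp [Finset.mem_compl, mem_supp, h0]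
      simp only [dif_pos h]
      split <;> simp
    · intro h0
      have h : ¬ i ∈ (supp c)ᶜ := by simp [Finset.mem_compl, mem_supp, h0]
      simp only [dif_neg h]
  · ext j
    simp only [E, Finset.mem_filter, Finset.mem_univ, true_and]
    have hmem : ((fe c).symm j).1 ∈ (supp c)ᶜ := ((fe c).symm j).2
    simp only [dif_pos hmem]
    have he : (⟨((fe c).symm j).1, hmem⟩ : {i // i ∈ (supp c)ᶜ}) = (fe c).symm j :=
      Subtype.ext rfl
    rw [he, Equiv.apply_symm_apply]
    by_cases hT : j ∈ T <;> simp [hT]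

def mkc (hq : 2 ≤ q) (s : Finset (Fin n)) (f : {i // i ∈ s} → Fin (q - 2)) :
    Fin n → Fin q :=
  fun i => if h : i ∈ s then
    ⟨(f ⟨i, h⟩ : ℕ) + 2, by have := (f ⟨i, h⟩).is_lt; omega⟩ else ⟨0, by omega⟩

lemma supp_mkc (hq : 2 ≤ q) (s : Finset (Fin n)) (f : {i // i ∈ s} → Fin (q - 2)) :
    supp (mkc hq s f) = s := by
  ext i
  rw [mem_supp]
  unfold mkc
  by_cases h : i ∈ s <;> simp [h]

lemma mkc_good (hq : 2 ≤ q) (s : Finset (Fin n)) (f : {i // i ∈ s} → Fin (q - 2)) :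
    ∀ i, ((mkc hq s f) i : ℕ) ≠ 1 := by
  intro i
  unfold mkc
  by_cases h : i ∈ s <;> simp [h]

lemma mkc_bij (hq : 2 ≤ q) (l : ℕ) :
    Function.Bijective
      (fun p : (Σ s : {s : Finset (Fin n) // s.card = l}, ({i // i ∈ s.1} → Fin (q - 2))) =>
        (⟨mkc hq p.1.1 p.2, mkc_good hq p.1.1 p.2,
          by rw [rk, supp_mkc]; exact p.1.2⟩ :
          {c : Fin n → Fin q // (∀ i, (c i : ℕ) ≠ 1) ∧ rk c = l})) := by
  constructor
  · rintro ⟨⟨s, hs⟩, f⟩ ⟨⟨s', hs'⟩, f'⟩ h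
    have hfe : mkc hq s f = mkc hq s' f' := congrArg Subtype.val h
    have hss : s = s' := by
      rw [← supp_mkc hq s f, ← supp_mkc hq s' f', hfe]
    subst hss
    have hff : f = f' := by
      funext i
      have := congrFun hfe i.1
      unfold mkc at this
      rw [dif_pos i.2, dif_pos i.2] at this
      simp only [Fin.mk.injEq, Subtype.coe_eta] at this
      exact Fin.ext (by omega)
    rw [hff]
  · rintro ⟨c, hc1, hc2⟩
    refine ⟨⟨⟨supp c, hc2⟩, fun i => ⟨(c i.1 : ℕ) - 2, ?_⟩⟩, ?_⟩
    · have h0 : (c i.1 : ℕ) ≠ 0 := mem_supp.mp i.2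
      have h1 := hc1 i.1
      have := (c i.1).is_lt
      omega
    · apply Subtype.ext
      funext i
      simp only [mkc]
      by_cases h : i ∈ supp c
      · simp only [dif_pos h]
        have h0 : (c i : ℕ) ≠ 0 := mem_supp.mp h
        have h1 := hc1 i
        exact Fin.ext (by simp; omega)
      · simp only [dif_neg h]
        have h0 : (c i : ℕ) = 0 := by simpa [mem_supp] using h
        exact Fin.ext (by simp [h0])

end UBaux

open UBaux in
theorem partition_into_upper_boolean_subsets (q n : ℕ) (hq : 2 ≤ q) :
    ∃ (ι : Type) (_ : Fintype ι) (P : ι → Set (Fin n → Fin q)) (t : ι → ℕ),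
      Pairwise (Function.onFun Disjoint P) ∧
      (⋃ c, P c) = Set.univ ∧
      (∀ c, IsUpperBooleanSubset q n (t c) (P c)) ∧
      (∀ l : ℕ, l ≤ n →
        Nat.card {c : ι // t c = n - l} = (q - 2) ^ l * n.choose l) := by
  classical
  refine ⟨{c : Fin n → Fin q // ∀ i, (c i : ℕ) ≠ 1}, inferInstance,
    fun c => part c.1, fun c => n - rk c.1, ?_, ?_, ?_, ?_⟩
  · -- pairwise disjoint
    intro c c' hne
    rw [Function.onFun, Set.disjoint_left]
    intro a hac hac'
    apply hne
    apply Subtype.ext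
    rw [← idx_eq_of_mem hq c.2 hac, ← idx_eq_of_mem hq c'.2 hac']
  · -- covers
    ext a
    simp only [Set.mem_iUnion, Set.mem_univ, iff_true]
    exact ⟨⟨idx hq a, idx_good hq a⟩, mem_part_idx hq a⟩
  · -- upper Boolean
    intro c
    refine ⟨Nat.sub_le n _, ?_, ?_⟩
    · rw [Nat.sub_sub_self (rk_le c.1)]
      exact rankset_part hq c.2
    · have hbij : Function.Bijective (fun a : part c.1 => E c.1 a) := by
        constructor
        · intro a b hab
          have hab' : E c.1 a = E c.1 b := hab
          exact Subtype.ext (tle_antisymm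
            ((E_mono a b).mpr (hab' ▸ Finset.Subset.refl _))
            ((E_mono b a).mpr (hab'.symm ▸ Finset.Subset.refl _)))
        · exact E_surj hq c.1
      exact ⟨Equiv.ofBijective _ hbij, fun a b => E_mono a b⟩
  · -- counting
    intro l hl
    have e1 : {c : {c : Fin n → Fin q // ∀ i, (c i : ℕ) ≠ 1} // n - rk c.1 = n - l} ≃
        {c : {c : Fin n → Fin q // ∀ i, (c i : ℕ) ≠ 1} // rk c.1 = l} :=
      Equiv.subtypeEquivRight (fun c => by have := rk_le c.1; omega)
    have e2 : {c : {c : Fin n → Fin q // ∀ i, (c i : ℕ) ≠ 1} // rk c.1 = l} ≃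
        {c : Fin n → Fin q // (∀ i, (c i : ℕ) ≠ 1) ∧ rk c = l} :=
      Equiv.subtypeSubtypeEquivSubtypeInter
        (fun c : Fin n → Fin q => ∀ i, (c i : ℕ) ≠ 1) (fun c => rk c = l)
    have e3 := (Equiv.ofBijective _ (mkc_bij (n := n) hq l)).symm
    rw [Nat.card_congr ((e1.trans e2).trans e3)]
    rw [Nat.card_eq_fintype_card, Fintype.card_sigma]
    have hcard : ∀ s : {s : Finset (Fin n) // s.card = l},
        Fintype.card ({i // i ∈ s.1} → Fin (q - 2)) = (q - 2) ^ l := by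
      intro s
      rw [Fintype.card_fun, Fintype.card_fin, Fintype.card_coe, s.2]
    rw [Finset.sum_congr rfl (fun s _ => hcard s), Finset.sum_const, smul_eq_mul]
    rw [Finset.card_univ, Fintype.card_finset_len, Fintype.card_fin, mul_comm]
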